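/- If X, Y ∈ M_n(ℂ) are accretive-dissipative, then ω(X ∘ Y) ≤ 2 min{ (max_j |x_jj|) ω(Y), (max_j |y_jj|) ω(X) }, where x_jj, y_jj are the diagonal entries. -/

import Mathlib

open Matrix Complex
open scoped ComplexOrder

/-- Hermitian real part `(X + Xᴴ)/2`. -/
noncomputable def reM {m : ℕ} (X : Matrix (Fin m) (Fin m) ℂ) : Matrix (Fin m) (Fin m) ℂ :=
  (1 / 2 : ℂ) • (X + Xᴴ)

/-- Hermitian imaginary part `(X - Xᴴ)/(2i)`. -/
noncomputable def imM {m : ℕ} (X : Matrix (Fin m) (Fin m) ℂ) : Matrix (Fin m) (Fin m) ℂ :=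
  (-Complex.I / 2) • (X - Xᴴ)

/-- Numerical range `W(X) = {⟨Xx, x⟩ : ‖x‖ = 1}`. -/
noncomputable def numRange {m : ℕ} (X : Matrix (Fin m) (Fin m) ℂ) : Set ℂ :=
  {z | ∃ x : EuclideanSpace ℂ (Fin m), ‖x‖ = 1 ∧ z = star (x : Fin m → ℂ) ⬝ᵥ X.mulVec x}

/-- Numerical radius `ω(X) = sup {|z| : z ∈ W(X)}`. -/
noncomputable def numRadius {m : ℕ} (X : Matrix (Fin m) (Fin m) ℂ) : ℝ :=
  sSup ((fun z : ℂ => ‖z‖) '' numRange X)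

/-- The sector `S_α`. -/
def sector (α : ℝ) : Set ℂ := {z : ℂ | 0 < z.re ∧ |z.im| ≤ Real.tan α * z.re}

/-- Operator norm of a matrix acting on Euclidean space. -/
noncomputable def opNorm {m : ℕ} (X : Matrix (Fin m) (Fin m) ℂ) : ℝ :=
  ‖Matrix.toEuclideanCLM (𝕜 := ℂ) X‖

section Aux

variable {n : ℕ}

lemma sum_sq_abs_of_norm_one (x : EuclideanSpace ℂ (Fin n)) (hx : ‖x‖ = 1) :
    ∑ i, ‖x i‖ ^ 2 = 1 := by
  have h2 : Real.sqrt (∑ i, ‖x i‖ ^ 2) = 1 := (EuclideanSpace.norm_eq x) ▸ hx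
  have h3 : ∑ i, ‖x i‖ ^ 2 = 1 := by
    have := Real.sq_sqrt (Finset.sum_nonneg fun i (_ : i ∈ Finset.univ) => sq_nonneg ‖x i‖)
    rw [h2] at this; simpa using this.symm
  simpa using h3

lemma numRadius_nonneg (Y : Matrix (Fin n) (Fin n) ℂ) : 0 ≤ numRadius Y :=
  Real.sSup_nonneg (by rintro r ⟨z, _, rfl⟩; exact norm_nonneg z)

lemma bddAbove_abs_numRange (Y : Matrix (Fin n) (Fin n) ℂ) :
    BddAbove ((fun z : ℂ => ‖z‖) '' numRange Y) := by
  refine ⟨∑ i, ∑ j, ‖Y i j‖, ?_⟩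
  rintro r ⟨z, ⟨x, hx, rfl⟩, rfl⟩
  have hsum := sum_sq_abs_of_norm_one x hx
  have hone : ∀ i, ‖x i‖ ≤ 1 := by
    intro i
    have h1 : ‖x i‖ ^ 2 ≤ ∑ j, ‖x j‖ ^ 2 :=
      Finset.single_le_sum (fun j _ => sq_nonneg (‖x j‖)) (Finset.mem_univ i)
    rw [hsum] at h1
    nlinarith [norm_nonneg (x i)]
  calc ‖star (x : Fin n → ℂ) ⬝ᵥ Y.mulVec x‖
      ≤ ∑ i, ‖starRingEnd ℂ (x i) * (Y.mulVec x i)‖ := by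
        simpa [dotProduct] using norm_sum_le Finset.univ
          (fun i => starRingEnd ℂ (x i) * (Y.mulVec x i))
    _ ≤ ∑ i, ∑ j, ‖Y i j‖ := by
        refine Finset.sum_le_sum fun i _ => ?_
        rw [norm_mul]
        have hmv : ‖Y.mulVec x i‖ ≤ ∑ j, ‖Y i j‖ := by
          calc ‖Y.mulVec x i‖ ≤ ∑ j, ‖Y i j * x j‖ := by
                simpa [mulVec, dotProduct] using norm_sum_le Finset.univ
                  (fun j => Y i j * x j)
            _ ≤ ∑ j, ‖Y i j‖ := Finset.sum_le_sum fun j _ => by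
                rw [norm_mul]
                exact mul_le_of_le_one_right (norm_nonneg _) (hone j)
        calc ‖starRingEnd ℂ (x i)‖ * ‖Y.mulVec x i‖
            ≤ 1 * ∑ j, ‖Y i j‖ :=
              mul_le_mul (by simpa using hone i) hmv (norm_nonneg _) zero_le_one
          _ = _ := one_mul _

lemma abs_qform_le_of_norm_one (Y : Matrix (Fin n) (Fin n) ℂ)
    (x : EuclideanSpace ℂ (Fin n)) (hx : ‖x‖ = 1) :
    ‖star (x : Fin n → ℂ) ⬝ᵥ Y.mulVec x‖ ≤ numRadius Y :=
  le_csSup (bddAbove_abs_numRange Y) ⟨_, ⟨x, hx, rfl⟩, rfl⟩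

lemma abs_qform_le (Y : Matrix (Fin n) (Fin n) ℂ) (w : Fin n → ℂ) :
    ‖star w ⬝ᵥ Y.mulVec w‖ ≤ numRadius Y * ∑ i, ‖w i‖ ^ 2 := by
  by_cases hw : w = 0
  · simp [hw]
  · set s : ℝ := ∑ i, ‖w i‖ ^ 2 with hs
    have hspos : 0 < s := by
      obtain ⟨i, hi⟩ := Function.ne_iff.mp hw
      refine Finset.sum_pos' (fun j _ => sq_nonneg _) ⟨i, Finset.mem_univ i, ?_⟩
      exact pow_pos (norm_pos_iff.mpr (by simpa using hi)) 2
    set c : ℝ := Real.sqrt s with hc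
    have hcpos : 0 < c := Real.sqrt_pos.mpr hspos
    have hc2 : c ^ 2 = s := Real.sq_sqrt hspos.le
    set u : EuclideanSpace ℂ (Fin n) := WithLp.toLp 2 (fun i => ((c : ℂ))⁻¹ * w i) with hu
    have hunorm : ‖u‖ = 1 := by
      rw [EuclideanSpace.norm_eq]
      have hterm : ∀ i, ‖u i‖ ^ 2 = c⁻¹ ^ 2 * ‖w i‖ ^ 2 := fun i => by
        simp [hu, PiLp.toLp_apply, norm_mul, norm_inv, Complex.norm_real, Real.norm_eq_abs,
          abs_of_pos hcpos, mul_pow]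
      rw [Finset.sum_congr rfl fun i _ => hterm i, ← Finset.mul_sum, ← hs, inv_pow, hc2,
        inv_mul_cancel₀ hspos.ne', Real.sqrt_one]
    have hq : star (u : Fin n → ℂ) ⬝ᵥ Y.mulVec u
        = ((c : ℂ))⁻¹ ^ 2 * (star w ⬝ᵥ Y.mulVec w) := by
      simp only [hu, WithLp.ofLp_toLp, PiLp.toLp_apply, dotProduct, mulVec, Pi.star_apply, RCLike.star_def, Finset.mul_sum]
      refine Finset.sum_congr rfl fun i _ => ?_
      refine Finset.sum_congr rfl fun j _ => ?_
      simp only [_root_.map_mul, map_inv₀, Complex.conj_ofReal]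
      ring
    have hcabs : ‖((c : ℂ))⁻¹ ^ 2‖ = s⁻¹ := by
      rw [norm_pow, norm_inv, Complex.norm_real, Real.norm_eq_abs, abs_of_pos hcpos, inv_pow, hc2]
    have habs : s⁻¹ * ‖star w ⬝ᵥ Y.mulVec w‖ ≤ numRadius Y := by
      have h := abs_qform_le_of_norm_one Y u hunorm
      rwa [hq, norm_mul, hcabs] at h
    calc ‖star w ⬝ᵥ Y.mulVec w‖
        = s * (s⁻¹ * ‖star w ⬝ᵥ Y.mulVec w‖) := by
          rw [← mul_assoc, mul_inv_cancel₀ hspos.ne', one_mul]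
      _ ≤ s * numRadius Y := mul_le_mul_of_nonneg_left habs hspos.le
      _ = numRadius Y * s := mul_comm _ _

lemma hadamard_qform_expand (C Y : Matrix (Fin n) (Fin n) ℂ) (x : Fin n → ℂ) :
    star x ⬝ᵥ ((Cᴴ * C) ⊙ Y).mulVec x
      = ∑ k, star (fun i => C k i * x i) ⬝ᵥ Y.mulVec (fun i => C k i * x i) := by
  simp only [dotProduct, mulVec, Matrix.hadamard_apply, Matrix.mul_apply,
    conjTranspose_apply, Pi.star_apply, RCLike.star_def, _root_.map_mul, Finset.mul_sum,
    Finset.sum_mul]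
  refine (Finset.sum_congr rfl fun i _ => Finset.sum_comm).trans ?_
  rw [Finset.sum_comm]
  refine Finset.sum_congr rfl fun k _ => Finset.sum_congr rfl fun i _ =>
    Finset.sum_congr rfl fun j _ => ?_
  ring

lemma diag_re_eq (C : Matrix (Fin n) (Fin n) ℂ) (i : Fin n) :
    ((Cᴴ * C) i i).re = ∑ k, ‖C k i‖ ^ 2 := by
  simp only [Matrix.mul_apply, conjTranspose_apply, Complex.re_sum]
  refine Finset.sum_congr rfl fun k _ => ?_
  simp [Complex.mul_re, Complex.conj_re, Complex.conj_im, Complex.sq_norm,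
    Complex.normSq_apply]

lemma X_decomp (X : Matrix (Fin n) (Fin n) ℂ) :
    X = reM X + Complex.I • imM X := by
  ext i j
  simp only [reM, imM, Matrix.add_apply, Matrix.smul_apply, Matrix.sub_apply,
    smul_eq_mul]
  linear_combination ((X i j - Xᴴ i j) / 2) * Complex.I_sq

lemma re_reM (X : Matrix (Fin n) (Fin n) ℂ) (i : Fin n) :
    ((reM X) i i).re = (X i i).re := by
  simp [reM, Matrix.smul_apply, Matrix.add_apply, conjTranspose_apply, smul_eq_mul,
    Complex.mul_re, Complex.add_re, Complex.add_im]
  ring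

lemma re_imM (X : Matrix (Fin n) (Fin n) ℂ) (i : Fin n) :
    ((imM X) i i).re = (X i i).im := by
  simp [imM, Matrix.smul_apply, Matrix.sub_apply, conjTranspose_apply, smul_eq_mul,
    Complex.mul_re, Complex.sub_re, Complex.sub_im, Complex.div_re, Complex.div_im]
  ring

lemma key_bound (C Y : Matrix (Fin n) (Fin n) ℂ) (x : Fin n → ℂ) :
    ‖star x ⬝ᵥ ((Cᴴ * C) ⊙ Y).mulVec x‖
      ≤ numRadius Y * ∑ i, ‖x i‖ ^ 2 * ((Cᴴ * C) i i).re := by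
  rw [hadamard_qform_expand]
  have h1 := norm_sum_le Finset.univ
    (fun k => star (fun i => C k i * x i) ⬝ᵥ Y.mulVec (fun i => C k i * x i))
  have h2 : ∑ k, ‖star (fun i => C k i * x i) ⬝ᵥ
        Y.mulVec (fun i => C k i * x i)‖
      ≤ ∑ k, numRadius Y * ∑ i, ‖C k i * x i‖ ^ 2 :=
    Finset.sum_le_sum fun k _ => abs_qform_le Y _
  have h3 : ∑ k, numRadius Y * ∑ i, ‖C k i * x i‖ ^ 2
      = numRadius Y * ∑ i, ‖x i‖ ^ 2 * ((Cᴴ * C) i i).re := by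
    rw [← Finset.mul_sum]
    congr 1
    rw [Finset.sum_comm]
    refine Finset.sum_congr rfl fun i _ => ?_
    rw [diag_re_eq, Finset.mul_sum]
    refine Finset.sum_congr rfl fun k _ => ?_
    rw [norm_mul, mul_pow]
    ring
  exact h1.trans (h2.trans h3.le)

lemma bound_one (X Y : Matrix (Fin n) (Fin n) ℂ)
    (hA : (reM X).PosSemidef) (hB : (imM X).PosSemidef)
    (x : EuclideanSpace ℂ (Fin n)) (hx : ‖x‖ = 1) :
    ‖star (x : Fin n → ℂ) ⬝ᵥ (X ⊙ Y).mulVec x‖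
      ≤ 2 * ((⨆ j, ‖X j j‖) * numRadius Y) := by
  set M := ⨆ j, ‖X j j‖ with hM
  have hMle : ∀ i, ‖X i i‖ ≤ M := fun i =>
    le_ciSup (f := fun j => ‖X j j‖) (Set.Finite.bddAbove (Set.finite_range _)) i
  have hsum1 := sum_sq_abs_of_norm_one x hx
  have hsplit : X ⊙ Y = (reM X) ⊙ Y + Complex.I • ((imM X) ⊙ Y) := by
    conv_lhs => rw [X_decomp X]
    rw [Matrix.add_hadamard, Matrix.smul_hadamard]
  have hq : star (x : Fin n → ℂ) ⬝ᵥ (X ⊙ Y).mulVec x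
      = star (x : Fin n → ℂ) ⬝ᵥ ((reM X) ⊙ Y).mulVec x
        + Complex.I * (star (x : Fin n → ℂ) ⬝ᵥ ((imM X) ⊙ Y).mulVec x) := by
    rw [hsplit, add_mulVec, dotProduct_add, smul_mulVec, dotProduct_smul,
      smul_eq_mul]
  have bnd : ∀ Z : Matrix (Fin n) (Fin n) ℂ, Z.PosSemidef →
      (∀ i, (Z i i).re ≤ ‖X i i‖) →
      ‖star (x : Fin n → ℂ) ⬝ᵥ (Z ⊙ Y).mulVec x‖ ≤ M * numRadius Y := by
    intro Z hZ hZd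
    obtain ⟨E, rfl⟩ : ∃ E : Matrix (Fin n) (Fin n) ℂ, Z = Eᴴ * E := by
      open scoped MatrixOrder in
      exact ⟨CFC.sqrt Z, by
        rw [← star_eq_conjTranspose, (IsSelfAdjoint.of_nonneg (CFC.sqrt_nonneg Z)).star_eq,
          CFC.sqrt_mul_sqrt_self Z hZ.nonneg]⟩
    refine (key_bound E Y x).trans ?_
    have hsum2 : ∑ i, ‖x i‖ ^ 2 * ((Eᴴ * E) i i).re ≤ M := by
      calc ∑ i, ‖x i‖ ^ 2 * ((Eᴴ * E) i i).re
          ≤ ∑ i, ‖x i‖ ^ 2 * M := Finset.sum_le_sum fun i _ =>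
            mul_le_mul_of_nonneg_left ((hZd i).trans (hMle i)) (sq_nonneg _)
        _ = M := by rw [← Finset.sum_mul, hsum1, one_mul]
    calc numRadius Y * ∑ i, ‖x i‖ ^ 2 * ((Eᴴ * E) i i).re
        ≤ numRadius Y * M := mul_le_mul_of_nonneg_left hsum2 (numRadius_nonneg Y)
      _ = M * numRadius Y := mul_comm _ _
  have hre : ∀ i, ((reM X) i i).re ≤ ‖X i i‖ := fun i => by
    rw [re_reM]; exact Complex.re_le_norm _
  have him : ∀ i, ((imM X) i i).re ≤ ‖X i i‖ := fun i => by
    rw [re_imM]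
    exact (le_abs_self _).trans (Complex.abs_im_le_norm _)
  have b1 := bnd (reM X) hA hre
  have b2 := bnd (imM X) hB him
  calc ‖star (x : Fin n → ℂ) ⬝ᵥ (X ⊙ Y).mulVec x‖
      ≤ ‖star (x : Fin n → ℂ) ⬝ᵥ ((reM X) ⊙ Y).mulVec x‖
        + ‖Complex.I * (star (x : Fin n → ℂ) ⬝ᵥ ((imM X) ⊙ Y).mulVec x)‖ := by
        rw [hq]; exact norm_add_le _ _
    _ = ‖star (x : Fin n → ℂ) ⬝ᵥ ((reM X) ⊙ Y).mulVec x‖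
        + ‖star (x : Fin n → ℂ) ⬝ᵥ ((imM X) ⊙ Y).mulVec x‖ := by
        rw [norm_mul, Complex.norm_I, one_mul]
    _ ≤ M * numRadius Y + M * numRadius Y := add_le_add b1 b2
    _ = 2 * (M * numRadius Y) := by ring

end Aux

theorem numRadius_hadamard_le_diag_of_accretiveDissipative {n : ℕ}
    (X Y : Matrix (Fin n) (Fin n) ℂ)
    (hX₁ : (reM X).PosDef) (hX₂ : (imM X).PosDef)
    (hY₁ : (reM Y).PosDef) (hY₂ : (imM Y).PosDef) :
    numRadius (X ⊙ Y) ≤ 2 *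
      min ((⨆ j, ‖X j j‖) * numRadius Y)
          ((⨆ j, ‖Y j j‖) * numRadius X) := by
  have hXnn : (0 : ℝ) ≤ ⨆ j, ‖X j j‖ :=
    Real.iSup_nonneg fun j => norm_nonneg _
  have hYnn : (0 : ℝ) ≤ ⨆ j, ‖Y j j‖ :=
    Real.iSup_nonneg fun j => norm_nonneg _
  have hrhs : (0 : ℝ) ≤ 2 * min ((⨆ j, ‖X j j‖) * numRadius Y)
      ((⨆ j, ‖Y j j‖) * numRadius X) := by
    have h1 := mul_nonneg hXnn (numRadius_nonneg Y)
    have h2 := mul_nonneg hYnn (numRadius_nonneg X)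
    have := le_min h1 h2
    linarith
  refine Real.sSup_le ?_ hrhs
  rintro r ⟨z, ⟨x, hx, rfl⟩, rfl⟩
  rw [mul_min_of_nonneg _ _ (by norm_num : (0:ℝ) ≤ 2)]
  refine le_min ?_ ?_
  · exact bound_one X Y hX₁.posSemidef hX₂.posSemidef x hx
  · rw [Matrix.hadamard_comm]
    exact bound_one Y X hY₁.posSemidef hY₂.posSemidef x hx
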